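/- In a restriction category with restriction coproducts and restriction zero, if f : A → B + C has decision h : A → A + A and f' : A' → B' + C' has decision h' : A' → A' + A', then the map (1+τ+1) ∘ (f + f') : A + A' → (B + B') + (C + C') has decision (1+τ+1) ∘ (h + h') : A + A' → (A+A') + (A+A'), where τ denotes the symmetry isomorphism of the coproduct. -/

import Mathlib

set_option linter.unusedSectionVars false


open CategoryTheory CategoryTheory.Limits

universe v u

/-- A restriction category: a category with an operation assigning to each
morphism `f : A ⟶ B` a morphism `ρ f : A ⟶ A` satisfying axioms R.1–R.4.
(Composition is written diagrammatically: `f ≫ g` is "first `f`, then `g`",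
so the paper's `g ∘ f` is `f ≫ g`.) -/
class RestrictionCategory (C : Type u) [Category.{v} C] where
  ρ : ∀ {A B : C}, (A ⟶ B) → (A ⟶ A)
  R1 : ∀ {A B : C} (f : A ⟶ B), ρ f ≫ f = f
  R2 : ∀ {A B D : C} (f : A ⟶ B) (g : A ⟶ D), ρ f ≫ ρ g = ρ g ≫ ρ f
  R3 : ∀ {A B D : C} (f : A ⟶ B) (g : A ⟶ D), ρ (ρ f ≫ g) = ρ f ≫ ρ g
  R4 : ∀ {A B D : C} (f : A ⟶ B) (g : B ⟶ D), f ≫ ρ g = ρ (f ≫ g) ≫ f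

open RestrictionCategory

open ZeroObject

variable {C : Type u} [Category.{v} C] [RestrictionCategory C]
  [HasBinaryCoproducts C] [HasZeroObject C] [HasZeroMorphisms C]

/-- The restriction retraction `⟨1|0⟩ : A ⨿ B ⟶ A` of the first injection. -/
noncomputable def iStar (A B : C) : (A ⨿ B) ⟶ A := coprod.desc (𝟙 A) 0

/-- The restriction retraction `⟨0|1⟩ : A ⨿ B ⟶ B` of the second injection. -/
noncomputable def jStar (A B : C) : (A ⨿ B) ⟶ B := coprod.desc 0 (𝟙 B)

/-- `h : A ⟶ A ⨿ A` is a decision for `f : A ⟶ B ⨿ D` if it is restriction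
inverse to `⟨overline{i* f} | overline{j* f}⟩ : A ⨿ A ⟶ A` and `ρ h = ρ f`. -/
def IsDecision {A B D : C} (f : A ⟶ B ⨿ D) (h : A ⟶ A ⨿ A) : Prop :=
  coprod.desc (ρ (f ≫ iStar B D)) (ρ (f ≫ jStar B D)) ≫ h =
    ρ (coprod.desc (ρ (f ≫ iStar B D)) (ρ (f ≫ jStar B D))) ∧
  h ≫ coprod.desc (ρ (f ≫ iStar B D)) (ρ (f ≫ jStar B D)) = ρ h ∧
  ρ h = ρ f

/-- The middle-exchange isomorphism `1 + τ + 1 : (W ⨿ X) ⨿ (Y ⨿ Z) ⟶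
(W ⨿ Y) ⨿ (X ⨿ Z)`. -/
noncomputable def exch (W X Y Z : C) : (W ⨿ X) ⨿ (Y ⨿ Z) ⟶ (W ⨿ Y) ⨿ (X ⨿ Z) :=
  coprod.desc (coprod.map coprod.inl coprod.inl) (coprod.map coprod.inr coprod.inr)

lemma rho_id' (A : C) : ρ (𝟙 A) = 𝟙 A := by
  have := R1 (𝟙 A); simpa using this

lemma rho_rho {A B : C} (f : A ⟶ B) : ρ (ρ f) = ρ f := by
  have := R3 f (𝟙 A)
  simpa [rho_id'] using this

lemma rho_comp_rho {A B D : C} (f : A ⟶ B) (g : B ⟶ D) :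
    ρ (f ≫ ρ g) = ρ (f ≫ g) := by
  have h3 : ρ f ≫ ρ (f ≫ g) = ρ (f ≫ g) := by
    rw [← R3, ← Category.assoc, R1]
  calc ρ (f ≫ ρ g) = ρ (ρ (f ≫ g) ≫ f) := by rw [R4]
    _ = ρ (f ≫ g) ≫ ρ f := R3 _ _
    _ = ρ f ≫ ρ (f ≫ g) := (R2 _ _).symm
    _ = ρ (f ≫ g) := h3

lemma rho_desc {X Y Z : C} (a : X ⟶ Z) (b : Y ⟶ Z) :
    ρ (coprod.desc a b) = coprod.map (ρ a) (ρ b) := by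
  apply coprod.hom_ext
  · rw [coprod.inl_map]
    have := R4 (coprod.inl : X ⟶ X ⨿ Y) (coprod.desc a b)
    rw [coprod.inl_desc] at this
    exact this
  · rw [coprod.inr_map]
    have := R4 (coprod.inr : Y ⟶ X ⨿ Y) (coprod.desc a b)
    rw [coprod.inr_desc] at this
    exact this

lemma rho_map
    (htot : ∀ A B : C, ρ (coprod.inl : A ⟶ A ⨿ B) = 𝟙 A ∧
      ρ (coprod.inr : B ⟶ A ⨿ B) = 𝟙 B)
    {X Y Z W : C} (u : X ⟶ Z) (v : Y ⟶ W) :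
    ρ (coprod.map u v) = coprod.map (ρ u) (ρ v) := by
  have h1 : coprod.map u v = coprod.desc (u ≫ coprod.inl) (v ≫ coprod.inr) := by
    apply coprod.hom_ext <;> simp
  rw [h1, rho_desc, ← rho_comp_rho u coprod.inl, ← rho_comp_rho v coprod.inr,
    (htot Z W).1, (htot Z W).2, Category.comp_id, Category.comp_id]

lemma exch_exch (W X Y Z : C) : exch W X Y Z ≫ exch W Y X Z = 𝟙 _ := by
  apply coprod.hom_ext <;> apply coprod.hom_ext <;> simp [exch] <;> simp only [← Category.assoc, coprod.inl_desc, coprod.inr_desc] <;> simp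

instance (W X Y Z : C) : IsIso (exch W X Y Z) :=
  ⟨exch W Y X Z, exch_exch _ _ _ _, exch_exch _ _ _ _⟩

lemma exch_iStar (W X Y Z : C) :
    exch W X Y Z ≫ iStar (W ⨿ Y) (X ⨿ Z) = coprod.map (iStar W X) (iStar Y Z) := by
  apply coprod.hom_ext <;> apply coprod.hom_ext <;> simp [exch, iStar] <;> simp only [← Category.assoc, coprod.inl_desc, coprod.inr_desc] <;> simp

lemma exch_jStar (W X Y Z : C) :
    exch W X Y Z ≫ jStar (W ⨿ Y) (X ⨿ Z) = coprod.map (jStar W X) (jStar Y Z) := by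
  apply coprod.hom_ext <;> apply coprod.hom_ext <;> simp [exch, jStar] <;> simp only [← Category.assoc, coprod.inl_desc, coprod.inr_desc] <;> simp

lemma exch_nat {W X Y Z W' X' Y' Z' : C}
    (a : W ⟶ W') (b : X ⟶ X') (c : Y ⟶ Y') (d : Z ⟶ Z') :
    coprod.map (coprod.map a b) (coprod.map c d) ≫ exch W' X' Y' Z' =
      exch W X Y Z ≫ coprod.map (coprod.map a c) (coprod.map b d) := by
  apply coprod.hom_ext <;> apply coprod.hom_ext <;> simp [exch]

lemma exch_desc {W X Y Z T U : C}
    (a : W ⟶ T) (b : X ⟶ T) (c : Y ⟶ U) (d : Z ⟶ U) :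
    exch W X Y Z ≫ coprod.desc (coprod.map a c) (coprod.map b d) =
      coprod.map (coprod.desc a b) (coprod.desc c d) := by
  apply coprod.hom_ext <;> apply coprod.hom_ext <;> simp [exch] <;> simp only [← Category.assoc, coprod.inl_desc, coprod.inr_desc] <;> simp

lemma rho_exch
    (htot : ∀ A B : C, ρ (coprod.inl : A ⟶ A ⨿ B) = 𝟙 A ∧
      ρ (coprod.inr : B ⟶ A ⨿ B) = 𝟙 B)
    (W X Y Z : C) : ρ (exch W X Y Z) = 𝟙 _ := by
  rw [exch, rho_desc, rho_map htot, rho_map htot,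
    (htot W Y).1, (htot X Z).1, (htot W Y).2, (htot X Z).2]
  apply coprod.hom_ext <;> simp

/-- If `f : A ⟶ B ⨿ D` has decision `h` and `f' : A' ⟶ B' ⨿ D'` has decision
`h'`, then `(1+τ+1) ∘ (f + f') : A ⨿ A' ⟶ (B ⨿ B') ⨿ (D ⨿ D')` has decision
`(1+τ+1) ∘ (h + h')`. -/
theorem stmt_13
    (htot : ∀ A B : C, ρ (coprod.inl : A ⟶ A ⨿ B) = 𝟙 A ∧
      ρ (coprod.inr : B ⟶ A ⨿ B) = 𝟙 B)
    (hzero : ∀ A : C, ρ (0 : A ⟶ A) = (0 : A ⟶ A))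
    {A B D A' B' D' : C}
    (f : A ⟶ B ⨿ D) (h : A ⟶ A ⨿ A) (hf : IsDecision f h)
    (f' : A' ⟶ B' ⨿ D') (h' : A' ⟶ A' ⨿ A') (hf' : IsDecision f' h') :
    IsDecision (coprod.map f f' ≫ exch B D B' D')
      (coprod.map h h' ≫ exch A A A' A') := by
  obtain ⟨hp1, hp2, hp3⟩ := hf
  obtain ⟨hq1, hq2, hq3⟩ := hf'
  set α := ρ (f ≫ iStar B D) with hα
  set β := ρ (f ≫ jStar B D) with hβ
  set α' := ρ (f' ≫ iStar B' D') with hα'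
  set β' := ρ (f' ≫ jStar B' D') with hβ'
  have hFi : ρ ((coprod.map f f' ≫ exch B D B' D') ≫ iStar (B ⨿ B') (D ⨿ D')) =
      coprod.map α α' := by
    rw [Category.assoc, exch_iStar, coprod.map_map]
    exact rho_map htot _ _
  have hFj : ρ ((coprod.map f f' ≫ exch B D B' D') ≫ jStar (B ⨿ B') (D ⨿ D')) =
      coprod.map β β' := by
    rw [Category.assoc, exch_jStar, coprod.map_map]
    exact rho_map htot _ _
  have hρα : ρ α = α := rho_rho _
  have hρβ : ρ β = β := rho_rho _
  have hρα' : ρ α' = α' := rho_rho _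
  have hρβ' : ρ β' = β' := rho_rho _
  have hρP : ρ (coprod.desc (coprod.map α α') (coprod.map β β')) =
      coprod.map (coprod.map α α') (coprod.map β β') := by
    rw [rho_desc, rho_map htot, rho_map htot, hρα, hρβ, hρα', hρβ']
  have hρH : ρ (coprod.map h h' ≫ exch A A A' A') = coprod.map (ρ h) (ρ h') := by
    rw [← rho_comp_rho, rho_exch htot, Category.comp_id, rho_map htot]
  refine ⟨?_, ?_, ?_⟩
  · rw [hFi, hFj, hρP, ← cancel_epi (exch A A A' A'), ← Category.assoc,
      exch_desc, ← Category.assoc, coprod.map_map, hp1, hq1, rho_desc,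
      rho_desc, hρα, hρβ, hρα', hρβ', exch_nat]
  · rw [hFi, hFj, hρH, Category.assoc, exch_desc, coprod.map_map, hp2, hq2]
  · rw [hρH, hp3, hq3, ← rho_map htot, ← rho_comp_rho, rho_exch htot,
      Category.comp_id]
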